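/- Let Φ : ℝ^m → ℝ^m be a smooth involution with everywhere nonvanishing Jacobian determinant and let π : ℝ^m → ℝ_{>0} be a probability density. Define the involutive Monte Carlo kernel K(q, A) = a(q)·1{Φ(q) ∈ A} + (1 - a(q))·1{q ∈ A}, where a(q) = min{1, (π(Φ(q))/π(q))·|det ∇Φ(q)|}. Then K satisfies detailed balance with respect to the measure with density π: for all Borel sets A, B, ∫_A K(q, B) π(q) dq = ∫_B K(q, A) π(q) dq. -/

import Mathlib

open MeasureTheory

theorem involutive_monte_carlo_detailed_balance
    (m : ℕ)
    (Φ : EuclideanSpace ℝ (Fin m) → EuclideanSpace ℝ (Fin m))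
    (hΦsmooth : ContDiff ℝ 1 Φ)
    (hΦinv : Function.Involutive Φ)
    (hjac : ∀ q, LinearMap.det ((fderiv ℝ Φ q : _ →L[ℝ] _) :
      EuclideanSpace ℝ (Fin m) →ₗ[ℝ] EuclideanSpace ℝ (Fin m)) ≠ 0)
    (π : EuclideanSpace ℝ (Fin m) → ℝ)
    (hπpos : ∀ q, 0 < π q)
    (hπint : Integrable π)
    (hπprob : ∫ q, π q = 1)
    (a : EuclideanSpace ℝ (Fin m) → ℝ)
    (ha : ∀ q, a q = min 1 (π (Φ q) / π q *
      |LinearMap.det ((fderiv ℝ Φ q : _ →L[ℝ] _) :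
        EuclideanSpace ℝ (Fin m) →ₗ[ℝ] EuclideanSpace ℝ (Fin m))|))
    (K : EuclideanSpace ℝ (Fin m) → Set (EuclideanSpace ℝ (Fin m)) → ℝ)
    (hK : ∀ q A, K q A = a q * A.indicator (fun _ => (1 : ℝ)) (Φ q)
      + (1 - a q) * A.indicator (fun _ => (1 : ℝ)) q) :
    ∀ A B : Set (EuclideanSpace ℝ (Fin m)), MeasurableSet A → MeasurableSet B →
      ∫ q in A, K q B * π q = ∫ q in B, K q A * π q := by
  intro A B hA hB
  classical
  have hdiff : Differentiable ℝ Φ := hΦsmooth.differentiable one_ne_zero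
  set Jd : EuclideanSpace ℝ (Fin m) → ℝ :=
    fun q => |(fderiv ℝ Φ q).det| with hJddef
  have hJdet : ∀ q, (fderiv ℝ Φ q).det =
      LinearMap.det ((fderiv ℝ Φ q : _ →L[ℝ] _) :
        EuclideanSpace ℝ (Fin m) →ₗ[ℝ] EuclideanSpace ℝ (Fin m)) := fun q => rfl
  -- chain rule for the involution
  have hcomp : ∀ q, (fderiv ℝ Φ (Φ q)).comp (fderiv ℝ Φ q)
      = ContinuousLinearMap.id ℝ (EuclideanSpace ℝ (Fin m)) := by
    intro q
    have h1 : HasFDerivAt (Φ ∘ Φ) ((fderiv ℝ Φ (Φ q)).comp (fderiv ℝ Φ q)) q :=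
      (hdiff (Φ q)).hasFDerivAt.comp q (hdiff q).hasFDerivAt
    have h2 : (Φ ∘ Φ) = id := funext hΦinv
    rw [h2] at h1
    exact h1.unique (hasFDerivAt_id q)
  have hJmul : ∀ q, Jd (Φ q) * Jd q = 1 := by
    intro q
    have := congrArg ContinuousLinearMap.det (hcomp q)
    rw [ContinuousLinearMap.det, ContinuousLinearMap.toLinearMap_comp, LinearMap.det_comp,
      ContinuousLinearMap.det, ContinuousLinearMap.coe_id, LinearMap.det_id] at this
    simp only [hJddef, ← abs_mul, ContinuousLinearMap.det, this, abs_one]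
  have hJpos : ∀ q, 0 < Jd q := by
    intro q
    exact abs_pos.mpr (hjac q)
  set g : EuclideanSpace ℝ (Fin m) → ℝ :=
    fun q => min (π q) (π (Φ q) * Jd q) with hgdef
  have hag : ∀ q, a q * π q = g q := by
    intro q
    rw [ha q, min_mul_of_nonneg _ _ (hπpos q).le, one_mul]
    congr 1
    rw [← hJdet]
    field_simp
    rw [mul_assoc, mul_div_assoc, mul_div_cancel_left₀ _ (hπpos q).ne']
  have hg0 : ∀ q, 0 ≤ g q := fun q =>
    le_min (hπpos q).le (mul_nonneg (hπpos (Φ q)).le (hJpos q).le)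
  have hgπ : ∀ q, g q ≤ π q := fun q => min_le_left _ _
  have hgJ : ∀ q, Jd q * g (Φ q) = g q := by
    intro q
    simp only [hgdef]
    rw [mul_min_of_nonneg _ _ (hJpos q).le, hΦinv q]
    rw [min_comm]
    congr 1
    · linear_combination π q * hJmul q
    · ring
  -- measurability facts
  have hΦm : Measurable Φ := hΦsmooth.continuous.measurable
  have himg : ∀ s : Set (EuclideanSpace ℝ (Fin m)), Φ ⁻¹' s = Φ '' s := by
    intro s
    ext x
    constructor
    · intro hx; exact ⟨Φ x, hx, hΦinv x⟩
    · rintro ⟨y, hy, rfl⟩; simpa [Set.mem_preimage, hΦinv y] using hy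
  have qmp : Measure.QuasiMeasurePreserving Φ
      (volume : Measure (EuclideanSpace ℝ (Fin m))) volume := by
    refine ⟨hΦm, Measure.AbsolutelyContinuous.mk fun s hs h0 => ?_⟩
    rw [Measure.map_apply hΦm hs, himg s]
    exact addHaar_image_eq_zero_of_differentiableOn_of_addHaar_eq_zero volume
      (hdiff.differentiableOn) h0
  have hπm : AEMeasurable π (volume : Measure (EuclideanSpace ℝ (Fin m))) :=
    hπint.aemeasurable
  have hJdm : Measurable Jd :=
    (ContinuousLinearMap.continuous_det.measurable.comp (measurable_fderiv ℝ Φ)).abs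
  have hgm : AEMeasurable g (volume : Measure (EuclideanSpace ℝ (Fin m))) :=
    hπm.min ((hπm.comp_quasiMeasurePreserving qmp).mul hJdm.aemeasurable)
  -- indicator functions
  set iA : EuclideanSpace ℝ (Fin m) → ℝ := A.indicator (fun _ => (1:ℝ)) with hiAdef
  set iB : EuclideanSpace ℝ (Fin m) → ℝ := B.indicator (fun _ => (1:ℝ)) with hiBdef
  have hiAm : Measurable iA := measurable_const.indicator hA
  have hiBm : Measurable iB := measurable_const.indicator hB
  have hind01 : ∀ (s : Set (EuclideanSpace ℝ (Fin m))) x,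
      0 ≤ s.indicator (fun _ => (1:ℝ)) x ∧ s.indicator (fun _ => (1:ℝ)) x ≤ 1 := by
    intro s x
    by_cases hx : x ∈ s <;> simp [Set.indicator_apply, hx]
  -- the three pieces
  set F₁ : EuclideanSpace ℝ (Fin m) → ℝ := fun q => iA q * iB (Φ q) * g q with hF₁def
  set F₂ : EuclideanSpace ℝ (Fin m) → ℝ := fun q => iA q * iB q * (π q - g q) with hF₂def
  set G₁ : EuclideanSpace ℝ (Fin m) → ℝ := fun q => iB q * iA (Φ q) * g q with hG₁def
  have hbound : ∀ (f : EuclideanSpace ℝ (Fin m) → ℝ),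
      AEMeasurable f volume → (∀ q, ‖f q‖ ≤ ‖π q‖) → Integrable f := by
    intro f hf hb
    exact hπint.mono hf.aestronglyMeasurable (Filter.Eventually.of_forall hb)
  have hnrm : ∀ (u v w : ℝ), 0 ≤ u → u ≤ 1 → 0 ≤ v → v ≤ 1 → 0 ≤ w →
      ‖u * v * w‖ ≤ ‖w‖ := by
    intro u v w h1 h2 h3 h4 h5
    rw [Real.norm_eq_abs, Real.norm_eq_abs, abs_of_nonneg (by positivity),
      abs_of_nonneg h5]
    have huv : u * v ≤ 1 := mul_le_one₀ h2 h3 h4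
    exact mul_le_of_le_one_left h5 huv
  have hF₁i : Integrable F₁ := by
    refine hbound _ ((hiAm.aemeasurable.mul
      ((hiBm.comp hΦm).aemeasurable)).mul hgm) fun q => ?_
    refine le_trans (hnrm _ _ _ (hind01 A q).1 (hind01 A q).2
      (hind01 B (Φ q)).1 (hind01 B (Φ q)).2 (hg0 q)) ?_
    rw [Real.norm_eq_abs, Real.norm_eq_abs, abs_of_nonneg (hg0 q),
      abs_of_nonneg (hπpos q).le]
    exact hgπ q
  have hF₂i : Integrable F₂ := by
    refine hbound _ ((hiAm.aemeasurable.mul hiBm.aemeasurable).mul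
      (hπm.sub hgm)) fun q => ?_
    refine le_trans (hnrm _ _ _ (hind01 A q).1 (hind01 A q).2
      (hind01 B q).1 (hind01 B q).2 (by linarith [hgπ q])) ?_
    rw [Real.norm_eq_abs, Real.norm_eq_abs, abs_of_nonneg (by linarith [hgπ q]),
      abs_of_nonneg (hπpos q).le]
    linarith [hg0 q]
  have hG₁i : Integrable G₁ := by
    refine hbound _ ((hiBm.aemeasurable.mul
      ((hiAm.comp hΦm).aemeasurable)).mul hgm) fun q => ?_
    refine le_trans (hnrm _ _ _ (hind01 B q).1 (hind01 B q).2
      (hind01 A (Φ q)).1 (hind01 A (Φ q)).2 (hg0 q)) ?_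
    rw [Real.norm_eq_abs, Real.norm_eq_abs, abs_of_nonneg (hg0 q),
      abs_of_nonneg (hπpos q).le]
    exact hgπ q
  -- change of variables: ∫ G₁ = ∫ F₁
  have hCoV : ∫ q, G₁ q = ∫ q, F₁ q := by
    have himguniv : Φ '' Set.univ = Set.univ :=
      Set.image_univ.trans hΦinv.surjective.range_eq
    have := integral_image_eq_integral_abs_det_fderiv_smul
      (volume : Measure (EuclideanSpace ℝ (Fin m))) MeasurableSet.univ
      (fun x _ => (hdiff x).hasFDerivAt.hasFDerivWithinAt)
      hΦinv.injective.injOn G₁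
    rw [himguniv, Measure.restrict_univ] at this
    rw [this]
    congr 1
    funext q
    simp only [smul_eq_mul, hG₁def, hF₁def, hiAdef, hiBdef, hΦinv q]
    calc Jd q * (iB (Φ q) * iA q * g (Φ q))
        = iA q * iB (Φ q) * (Jd q * g (Φ q)) := by ring
      _ = iA q * iB (Φ q) * g q := by rw [hgJ q]
  -- pointwise decomposition of the integrands
  have hLpt : ∀ q, A.indicator (fun q => K q B * π q) q = F₁ q + F₂ q := by
    intro q
    by_cases hq : q ∈ A
    · rw [Set.indicator_of_mem hq, hK]
      simp only [hF₁def, hF₂def, hiAdef, hiBdef, Set.indicator_of_mem hq]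
      have h := hag q
      linear_combination (B.indicator (fun _ => (1:ℝ)) (Φ q)
        - B.indicator (fun _ => (1:ℝ)) q) * h
    · rw [Set.indicator_of_notMem hq]
      simp only [hF₁def, hF₂def, hiAdef, hiBdef, Set.indicator_of_notMem hq]
      ring
  have hRpt : ∀ q, B.indicator (fun q => K q A * π q) q = G₁ q + F₂ q := by
    intro q
    by_cases hq : q ∈ B
    · rw [Set.indicator_of_mem hq, hK]
      simp only [hG₁def, hF₂def, hiAdef, hiBdef, Set.indicator_of_mem hq]
      have h := hag q
      linear_combination (A.indicator (fun _ => (1:ℝ)) (Φ q)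
        - A.indicator (fun _ => (1:ℝ)) q) * h
    · rw [Set.indicator_of_notMem hq]
      simp only [hG₁def, hF₂def, hiAdef, hiBdef, Set.indicator_of_notMem hq]
      ring
  rw [← integral_indicator hA, ← integral_indicator hB]
  calc ∫ q, A.indicator (fun q => K q B * π q) q
      = ∫ q, (F₁ q + F₂ q) := by congr 1; funext q; exact hLpt q
    _ = (∫ q, F₁ q) + ∫ q, F₂ q := integral_add hF₁i hF₂i
    _ = (∫ q, G₁ q) + ∫ q, F₂ q := by rw [hCoV]
    _ = ∫ q, (G₁ q + F₂ q) := (integral_add hG₁i hF₂i).symm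
    _ = ∫ q, B.indicator (fun q => K q A * π q) q := by
        congr 1; funext q; exact (hRpt q).symm
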